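/- For every triple of complex numbers (t2, t4, t6), the surface in ℂ³ defined by F(X,W,Z) = Z·(X² + 4Z³) + W² + 4·t2·Z³ + 4·(t4 + t2²/4)·Z² + 4·(t6 + t2·t4/6 + t2³/108)·Z = 0 is singular, i.e. there exists a point (X,W,Z) ∈ ℂ³ with F(X,W,Z) = 0 at which all three partial derivatives of F vanish. (This is the type B₃ instance of the theorem that every fiber of the quotient deformation is singular.) -/

import Mathlib

theorem stmt_1 (t2 t4 t6 : ℂ) :
    ∃ X W Z : ℂ,
      Z * (X ^ 2 + 4 * Z ^ 3) + W ^ 2 + 4 * t2 * Z ^ 3 + 4 * (t4 + t2 ^ 2 / 4) * Z ^ 2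
        + 4 * (t6 + t2 * t4 / 6 + t2 ^ 3 / 108) * Z = 0 ∧
      deriv (fun X' : ℂ =>
        Z * (X' ^ 2 + 4 * Z ^ 3) + W ^ 2 + 4 * t2 * Z ^ 3 + 4 * (t4 + t2 ^ 2 / 4) * Z ^ 2
          + 4 * (t6 + t2 * t4 / 6 + t2 ^ 3 / 108) * Z) X = 0 ∧
      deriv (fun W' : ℂ =>
        Z * (X ^ 2 + 4 * Z ^ 3) + W' ^ 2 + 4 * t2 * Z ^ 3 + 4 * (t4 + t2 ^ 2 / 4) * Z ^ 2
          + 4 * (t6 + t2 * t4 / 6 + t2 ^ 3 / 108) * Z) W = 0 ∧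
      deriv (fun Z' : ℂ =>
        Z' * (X ^ 2 + 4 * Z' ^ 3) + W ^ 2 + 4 * t2 * Z' ^ 3 + 4 * (t4 + t2 ^ 2 / 4) * Z' ^ 2
          + 4 * (t6 + t2 * t4 / 6 + t2 ^ 3 / 108) * Z') Z = 0 := by
  set b : ℂ := t6 + t2 * t4 / 6 + t2 ^ 3 / 108 with hb
  obtain ⟨x, hx⟩ := IsAlgClosed.exists_pow_nat_eq (k := ℂ) (-(4 * b)) (n := 2) (by norm_num)
  refine ⟨x, 0, 0, by ring, ?_, ?_, ?_⟩
  · have : (fun X' : ℂ => (0:ℂ) * (X' ^ 2 + 4 * 0 ^ 3) + 0 ^ 2 + 4 * t2 * 0 ^ 3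
      + 4 * (t4 + t2 ^ 2 / 4) * 0 ^ 2 + 4 * b * 0) = fun _ => (0:ℂ) := by
      funext X'; ring
    rw [this, deriv_const]
  · have h : HasDerivAt (fun W' : ℂ =>
        (0:ℂ) * (x ^ 2 + 4 * 0 ^ 3) + W' ^ 2 + 4 * t2 * 0 ^ 3 + 4 * (t4 + t2 ^ 2 / 4) * 0 ^ 2
          + 4 * b * 0) (2 * 0) 0 := by
      have h0 := (((hasDerivAt_pow 2 (0:ℂ)).const_add ((0:ℂ) * (x ^ 2 + 4 * 0 ^ 3))).add_const
        (4 * t2 * 0 ^ 3)).add_const (4 * (t4 + t2 ^ 2 / 4) * 0 ^ 2) |>.add_const (4 * b * 0)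
      simpa using h0
    simpa using h.deriv
  · have h : HasDerivAt (fun Z' : ℂ =>
        Z' * (x ^ 2 + 4 * Z' ^ 3) + (0:ℂ) ^ 2 + 4 * t2 * Z' ^ 3 + 4 * (t4 + t2 ^ 2 / 4) * Z' ^ 2
          + 4 * b * Z') (x ^ 2 + 4 * b) 0 := by
      have h1 : HasDerivAt (fun Z' : ℂ => Z' * (x ^ 2 + 4 * Z' ^ 3)) (x ^ 2) 0 := by
        have := (hasDerivAt_id' (0:ℂ)).fun_mul (((hasDerivAt_pow 3 (0:ℂ)).const_mul 4).const_add (x ^ 2))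
        simpa using this
      have h2 : HasDerivAt (fun Z' : ℂ => 4 * t2 * Z' ^ 3) 0 (0:ℂ) := by
        simpa using (hasDerivAt_pow 3 (0:ℂ)).const_mul (4 * t2)
      have h3 : HasDerivAt (fun Z' : ℂ => 4 * (t4 + t2 ^ 2 / 4) * Z' ^ 2) 0 (0:ℂ) := by
        simpa using (hasDerivAt_pow 2 (0:ℂ)).const_mul (4 * (t4 + t2 ^ 2 / 4))
      have h4 : HasDerivAt (fun Z' : ℂ => 4 * b * Z') (4 * b) (0:ℂ) := by
        simpa using (hasDerivAt_id (0:ℂ)).const_mul (4 * b)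
      have := (((h1.add_const ((0:ℂ) ^ 2)).fun_add h2).fun_add h3).fun_add h4
      exact this.congr_deriv (by ring)
    have := h.deriv
    rw [this, hx]; ring
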